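/- arXiv:2206.05023 — 4 statements merged into one kernel-verified Lean document; each statement's English description precedes it below -/
import Mathlib

section
/- Let f be an arithmetic function with ∑_{n ≤ x} f(n) = O(x^ξ) for some real ξ > 0, and let k be a nonnegative integer with k = ξ. Then ∑_{n ≤ x} f(n)⌊x/n⌋^k = O(x^{k + 1/2}). -/
open Finset Filter Asymptotics


private lemma icc_to_range (N : ℕ) (f : ℕ → ℝ) :
    ∑ i ∈ Icc 1 N, f i = ∑ i ∈ range N, f (i + 1) := by
  rw [← Finset.Ico_add_one_right_eq_Icc, Finset.sum_Ico_eq_sum_range]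
  simp [add_comm]

private lemma tele_pow (k : ℕ) (hk : 1 ≤ k) (M : ℕ) :
    ∑ m ∈ Icc 1 M, (((m : ℝ)) ^ k - ((m : ℝ) - 1) ^ k) = (M : ℝ) ^ k := by
  rw [icc_to_range]
  have h : ∀ i : ℕ, (((i + 1 : ℕ) : ℝ)) ^ k - (((i + 1 : ℕ) : ℝ) - 1) ^ k
      = (fun j : ℕ => ((j : ℝ)) ^ k) (i + 1) - (fun j : ℕ => ((j : ℝ)) ^ k) i := by
    intro i; push_cast; ring
  rw [Finset.sum_congr rfl fun i _ => h i, Finset.sum_range_sub (fun j : ℕ => ((j : ℝ)) ^ k)]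
  simp [zero_pow (by omega : k ≠ 0)]

private lemma sum_inv_le_sqrt (N : ℕ) :
    ∑ m ∈ Icc 1 N, (1 : ℝ) / m ≤ 2 * Real.sqrt N := by
  have step : ∀ m : ℕ, 1 ≤ m →
      (1 : ℝ) / m ≤ 2 * (Real.sqrt m - Real.sqrt ((m - 1 : ℕ) : ℝ)) := by
    intro m hm
    have hm1 : (1 : ℝ) ≤ (m : ℝ) := by exact_mod_cast hm
    have hcast : ((m - 1 : ℕ) : ℝ) = (m : ℝ) - 1 := by
      have := Nat.cast_sub (R := ℝ) hm; push_cast at this ⊢; linarith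
    set a := Real.sqrt m with ha
    set b := Real.sqrt ((m - 1 : ℕ) : ℝ) with hbdef
    have hb0 : 0 ≤ b := Real.sqrt_nonneg _
    have ha2 : a ^ 2 = m := Real.sq_sqrt (by linarith)
    have hb2 : b ^ 2 = (m : ℝ) - 1 := by rw [hbdef, hcast]; exact Real.sq_sqrt (by linarith)
    have ha1 : 1 ≤ a := Real.one_le_sqrt.mpr hm1
    have hba : b ≤ a := by rw [ha, hbdef]; exact Real.sqrt_le_sqrt (by rw [hcast]; linarith)
    have ham : a ≤ m := by
      rw [ha]; rw [Real.sqrt_le_left (by linarith)]; nlinarith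
    rw [div_le_iff₀ (by linarith)]
    nlinarith [mul_nonneg (sub_nonneg.mpr hba) (by linarith : (0:ℝ) ≤ 2 * (m:ℝ) - (a + b))]
  calc ∑ m ∈ Icc 1 N, (1 : ℝ) / m
      ≤ ∑ m ∈ Icc 1 N, 2 * (Real.sqrt m - Real.sqrt ((m - 1 : ℕ) : ℝ)) :=
        Finset.sum_le_sum fun m hm => step m (Finset.mem_Icc.mp hm).1
    _ = 2 * Real.sqrt N := by
        rw [icc_to_range]
        have h : ∀ i : ℕ, 2 * (Real.sqrt ((i + 1 : ℕ) : ℝ) - Real.sqrt (((i + 1) - 1 : ℕ) : ℝ))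
            = 2 * ((fun j : ℕ => Real.sqrt j) (i + 1) - (fun j : ℕ => Real.sqrt j) i) := by
          intro i; simp
        rw [Finset.sum_congr rfl fun i _ => h i, ← Finset.mul_sum,
          Finset.sum_range_sub (fun j : ℕ => Real.sqrt (j : ℝ))]
        simp

private lemma pow_sub_le (k : ℕ) (a : ℝ) (ha : 1 ≤ a) :
    a ^ k - (a - 1) ^ k ≤ (k : ℝ) * a ^ (k - 1) := by
  have hb : 0 ≤ a - 1 := by linarith
  have h := geom_sum₂_mul a (a - 1) k
  rw [show a - (a - 1) = 1 by ring, mul_one] at h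
  rw [← h]
  calc ∑ i ∈ range k, a ^ i * (a - 1) ^ (k - 1 - i)
      ≤ ∑ _i ∈ range k, a ^ (k - 1) := by
        refine Finset.sum_le_sum fun i hi => ?_
        have h1 : (a - 1) ^ (k - 1 - i) ≤ a ^ (k - 1 - i) :=
          pow_le_pow_left₀ hb (by linarith) _
        calc a ^ i * (a - 1) ^ (k - 1 - i) ≤ a ^ i * a ^ (k - 1 - i) :=
              mul_le_mul_of_nonneg_left h1 (by positivity)
          _ = a ^ (k - 1) := by
              rw [← pow_add]; congr 1
              have := Finset.mem_range.mp hi; omega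
    _ = (k : ℝ) * a ^ (k - 1) := by simp [mul_comm]

private lemma swap_sum (f : ℕ → ℝ) (k : ℕ) (hk : 1 ≤ k) (x : ℝ) (hx : 1 ≤ x) :
    ∑ n ∈ Icc 1 ⌊x⌋₊, f n * ((⌊x / (n : ℝ)⌋₊ : ℝ)) ^ k
      = ∑ m ∈ Icc 1 ⌊x⌋₊, (((m : ℝ)) ^ k - ((m : ℝ) - 1) ^ k) *
          ∑ n ∈ Icc 1 ⌊x / (m : ℝ)⌋₊, f n := by
  have hx0 : (0 : ℝ) ≤ x := by linarith
  have key : ∀ n ∈ Icc 1 ⌊x⌋₊,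
      (Icc 1 ⌊x⌋₊).filter (fun m => ((m : ℕ) : ℝ) * (n : ℝ) ≤ x) = Icc 1 ⌊x / (n : ℝ)⌋₊ := by
    intro n hn
    obtain ⟨hn1, _⟩ := Finset.mem_Icc.mp hn
    have hn0 : (0 : ℝ) < (n : ℝ) := by exact_mod_cast hn1
    ext m
    simp only [Finset.mem_filter, Finset.mem_Icc]
    constructor
    · rintro ⟨⟨h1, _⟩, h3⟩
      exact ⟨h1, Nat.le_floor ((le_div_iff₀ hn0).mpr h3)⟩
    · rintro ⟨h1, h2⟩
      have hmx : (m : ℝ) ≤ x / n := (Nat.le_floor_iff (by positivity)).mp h2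
      have h3 : (m : ℝ) * n ≤ x := (le_div_iff₀ hn0).mp hmx
      have hn1' : (1 : ℝ) ≤ (n : ℝ) := by exact_mod_cast hn1
      have hmle : (m : ℝ) ≤ x :=
        le_trans (le_mul_of_one_le_right (by positivity) hn1') h3
      exact ⟨⟨h1, Nat.le_floor hmle⟩, h3⟩
  calc ∑ n ∈ Icc 1 ⌊x⌋₊, f n * ((⌊x / (n : ℝ)⌋₊ : ℝ)) ^ k
      = ∑ n ∈ Icc 1 ⌊x⌋₊, ∑ m ∈ Icc 1 ⌊x⌋₊,
          (if ((m : ℝ)) * (n : ℝ) ≤ x then f n * (((m : ℝ)) ^ k - ((m : ℝ) - 1) ^ k) else 0) := by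
        refine Finset.sum_congr rfl fun n hn => ?_
        rw [← tele_pow k hk, Finset.mul_sum, ← Finset.sum_filter, key n hn]
    _ = ∑ m ∈ Icc 1 ⌊x⌋₊, ∑ n ∈ Icc 1 ⌊x⌋₊,
          (if ((m : ℝ)) * (n : ℝ) ≤ x then f n * (((m : ℝ)) ^ k - ((m : ℝ) - 1) ^ k) else 0) :=
        Finset.sum_comm
    _ = ∑ m ∈ Icc 1 ⌊x⌋₊, (((m : ℝ)) ^ k - ((m : ℝ) - 1) ^ k) *
          ∑ n ∈ Icc 1 ⌊x / (m : ℝ)⌋₊, f n := by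
        refine Finset.sum_congr rfl fun m hm => ?_
        rw [Finset.mul_sum, ← key m hm, Finset.sum_filter]
        refine Finset.sum_congr rfl fun n _ => ?_
        rw [mul_comm ((n : ℝ)) ((m : ℝ))]
        split <;> ring

theorem bullet_asymp_eq (f : ℕ → ℝ) (ξ : ℝ) (hξ : 0 < ξ) (k : ℕ) (hk : (k : ℝ) = ξ)
    (hf : (fun x : ℝ => ∑ n ∈ Finset.Icc 1 ⌊x⌋₊, f n) =O[atTop] fun x : ℝ => x ^ ξ) :
    (fun x : ℝ => ∑ n ∈ Finset.Icc 1 ⌊x⌋₊, f n * ((⌊x / (n : ℝ)⌋₊ : ℝ)) ^ k)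
      =O[atTop] fun x : ℝ => x ^ ((k : ℝ) + 1 / 2) := by
  have hk1 : 1 ≤ k := by
    rcases Nat.eq_zero_or_pos k with h | h
    · exfalso; rw [h] at hk; simp at hk; linarith
    · exact h
  rw [isBigO_iff] at hf
  obtain ⟨C, hC⟩ := hf
  rw [eventually_atTop] at hC
  obtain ⟨x₀, hx₀⟩ := hC
  set x₁ := max x₀ 1 with hx₁def
  set B := ∑ n ∈ Icc 1 ⌊x₁⌋₊, |f n| with hBdef
  have hB0 : 0 ≤ B := Finset.sum_nonneg fun n _ => abs_nonneg _
  set C' := |C| + B with hC'def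
  have hC'0 : 0 ≤ C' := by positivity
  have hF : ∀ y : ℝ, 1 ≤ y → |∑ n ∈ Icc 1 ⌊y⌋₊, f n| ≤ C' * y ^ k := by
    intro y hy
    have hy0 : (0 : ℝ) < y := by linarith
    have hyk : (1 : ℝ) ≤ y ^ k := one_le_pow₀ hy
    by_cases h : x₁ ≤ y
    · have h0 : x₀ ≤ y := le_trans (le_max_left _ _) h
      have hb := hx₀ y h0
      have hyξ : ‖y ^ ξ‖ = y ^ k := by
        rw [← hk, Real.rpow_natCast, Real.norm_eq_abs, abs_of_nonneg (by positivity)]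
      calc |∑ n ∈ Icc 1 ⌊y⌋₊, f n| ≤ C * ‖y ^ ξ‖ := hb
        _ = C * y ^ k := by rw [hyξ]
        _ ≤ |C| * y ^ k := mul_le_mul_of_nonneg_right (le_abs_self C) (by positivity)
        _ ≤ C' * y ^ k := by
            refine mul_le_mul_of_nonneg_right ?_ (by positivity)
            rw [hC'def]; linarith
    · push_neg at h
      have hsub : Icc 1 ⌊y⌋₊ ⊆ Icc 1 ⌊x₁⌋₊ :=
        Finset.Icc_subset_Icc_right (Nat.floor_le_floor h.le)
      calc |∑ n ∈ Icc 1 ⌊y⌋₊, f n| ≤ ∑ n ∈ Icc 1 ⌊y⌋₊, |f n| :=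
            Finset.abs_sum_le_sum_abs _ _
        _ ≤ B := Finset.sum_le_sum_of_subset_of_nonneg hsub fun _ _ _ => abs_nonneg _
        _ ≤ B * y ^ k := le_mul_of_one_le_right hB0 hyk
        _ ≤ C' * y ^ k := mul_le_mul_of_nonneg_right (by rw [hC'def]; linarith [abs_nonneg C]) (by positivity)
  rw [isBigO_iff]
  refine ⟨2 * (C' * k), eventually_atTop.mpr ⟨1, fun x hx => ?_⟩⟩
  have hx0 : (0 : ℝ) < x := by linarith
  have hnormr : ‖x ^ ((k : ℝ) + 1 / 2)‖ = x ^ k * Real.sqrt x := by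
    rw [Real.norm_eq_abs, abs_of_nonneg (Real.rpow_nonneg hx0.le _),
      Real.rpow_add hx0, Real.rpow_natCast, Real.sqrt_eq_rpow]
  rw [Real.norm_eq_abs, swap_sum f k hk1 x hx, hnormr]
  have hterm : ∀ m ∈ Icc 1 ⌊x⌋₊,
      |(((m : ℝ)) ^ k - ((m : ℝ) - 1) ^ k) * ∑ n ∈ Icc 1 ⌊x / (m : ℝ)⌋₊, f n|
        ≤ (C' * k * x ^ k) * (1 / m) := by
    intro m hm
    obtain ⟨hm1, hmN⟩ := Finset.mem_Icc.mp hm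
    have hm1' : (1 : ℝ) ≤ (m : ℝ) := by exact_mod_cast hm1
    have hm0 : (0 : ℝ) < (m : ℝ) := by linarith
    have hmx : (m : ℝ) ≤ x := le_trans (by exact_mod_cast hmN) (Nat.floor_le hx0.le)
    have hxm1 : (1 : ℝ) ≤ x / m := (one_le_div hm0).mpr hmx
    have hc0 : 0 ≤ ((m : ℝ)) ^ k - ((m : ℝ) - 1) ^ k :=
      sub_nonneg.mpr (pow_le_pow_left₀ (by linarith) (by linarith) k)
    have hcle : ((m : ℝ)) ^ k - ((m : ℝ) - 1) ^ k ≤ (k : ℝ) * (m : ℝ) ^ (k - 1) :=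
      pow_sub_le k (m : ℝ) hm1'
    have hFb := hF (x / m) hxm1
    calc |(((m : ℝ)) ^ k - ((m : ℝ) - 1) ^ k) * ∑ n ∈ Icc 1 ⌊x / (m : ℝ)⌋₊, f n|
        = (((m : ℝ)) ^ k - ((m : ℝ) - 1) ^ k) * |∑ n ∈ Icc 1 ⌊x / (m : ℝ)⌋₊, f n| := by
          rw [abs_mul, abs_of_nonneg hc0]
      _ ≤ ((k : ℝ) * (m : ℝ) ^ (k - 1)) * (C' * (x / m) ^ k) := by
          apply mul_le_mul hcle hFb (abs_nonneg _)
          positivity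
      _ = (C' * k * x ^ k) * (1 / m) := by
          rw [div_pow]
          have hmk : (m : ℝ) ^ k = (m : ℝ) ^ (k - 1) * m := by
            rw [← pow_succ]; congr 1; omega
          rw [hmk]
          field_simp
  calc |∑ m ∈ Icc 1 ⌊x⌋₊, (((m : ℝ)) ^ k - ((m : ℝ) - 1) ^ k) *
          ∑ n ∈ Icc 1 ⌊x / (m : ℝ)⌋₊, f n|
      ≤ ∑ m ∈ Icc 1 ⌊x⌋₊, |(((m : ℝ)) ^ k - ((m : ℝ) - 1) ^ k) *
          ∑ n ∈ Icc 1 ⌊x / (m : ℝ)⌋₊, f n| := Finset.abs_sum_le_sum_abs _ _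
    _ ≤ ∑ m ∈ Icc 1 ⌊x⌋₊, (C' * k * x ^ k) * (1 / m) := Finset.sum_le_sum hterm
    _ = (C' * k * x ^ k) * ∑ m ∈ Icc 1 ⌊x⌋₊, (1 : ℝ) / m := by rw [← Finset.mul_sum]
    _ ≤ (C' * k * x ^ k) * (2 * Real.sqrt ⌊x⌋₊) := by
        refine mul_le_mul_of_nonneg_left (sum_inv_le_sqrt ⌊x⌋₊) (by positivity)
    _ ≤ (C' * k * x ^ k) * (2 * Real.sqrt x) := by
        refine mul_le_mul_of_nonneg_left ?_ (by positivity)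
        have : Real.sqrt (⌊x⌋₊ : ℝ) ≤ Real.sqrt x := Real.sqrt_le_sqrt (Nat.floor_le hx0.le)
        linarith
    _ = 2 * (C' * k) * (x ^ k * Real.sqrt x) := by ring
end

section
/- Let f be an arithmetic function with ∑_{n ≤ x} f(n) = O(x^ξ), and let k ≥ 0 be an integer with k + 1 = ξ. Then ∑_{n ≤ x} f(n)⌊x/n⌋^k = O(x^{k+1} log x). -/
open Finset Filter Asymptotics

/-- Telescoping: for `k ≥ 1`, `∑_{j=1}^d (j^k - (j-1)^k) = d^k`. -/
lemma telescope_pow (k : ℕ) (hk : 1 ≤ k) (d : ℕ) :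
    ∑ j ∈ Finset.Icc 1 d, (((j : ℝ)) ^ k - ((j - 1 : ℕ) : ℝ) ^ k) = (d : ℝ) ^ k := by
  induction d with
  | zero => simp [zero_pow (by omega : k ≠ 0)]
  | succ d ih =>
      rw [Finset.sum_Icc_succ_top (by omega), ih]
      push_cast [Nat.add_sub_cancel]
      ring

/-- From the big-O hypothesis, a pointwise bound at all naturals `m ≥ 1`. -/
lemma exists_bound (f : ℕ → ℝ) (k : ℕ)
    (hf : (fun x : ℝ => ∑ n ∈ Finset.Icc 1 ⌊x⌋₊, f n) =O[atTop] fun x : ℝ => x ^ ((k : ℝ) + 1)) :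
    ∃ C : ℝ, 0 < C ∧ ∀ m : ℕ, 1 ≤ m → |∑ n ∈ Finset.Icc 1 m, f n| ≤ C * (m : ℝ) ^ (k + 1) := by
  obtain ⟨C, hC, hCb⟩ := hf.exists_pos
  rw [IsBigOWith, eventually_atTop] at hCb
  obtain ⟨x₀, hx₀⟩ := hCb
  set M : ℕ := ⌈max x₀ 1⌉₊ with hM
  refine ⟨C + ∑ m ∈ Finset.Icc 1 M, |∑ n ∈ Finset.Icc 1 m, f n|, by positivity, ?_⟩
  intro m hm
  by_cases hmM : m ≤ M
  · have h1 : |∑ n ∈ Finset.Icc 1 m, f n| ≤ ∑ m' ∈ Finset.Icc 1 M, |∑ n ∈ Finset.Icc 1 m', f n| :=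
      Finset.single_le_sum (f := fun m' => |∑ n ∈ Finset.Icc 1 m', f n|)
        (fun i _ => abs_nonneg _) (Finset.mem_Icc.2 ⟨hm, hmM⟩)
    have h2 : (1 : ℝ) ≤ (m : ℝ) ^ (k + 1) := by
      exact_mod_cast Nat.one_le_pow (k + 1) m (by omega)
    nlinarith [abs_nonneg (∑ n ∈ Finset.Icc 1 m, f n), hC.le,
      Finset.sum_nonneg (fun i (_ : i ∈ Finset.Icc 1 M) => abs_nonneg (∑ n ∈ Finset.Icc 1 i, f n))]
  · have hmx : x₀ ≤ (m : ℝ) := by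
      have : x₀ ≤ max x₀ 1 := le_max_left _ _
      have h2 : (max x₀ 1) ≤ (M : ℝ) := Nat.le_ceil _
      have h3 : (M : ℝ) ≤ (m : ℝ) := by exact_mod_cast (le_of_not_ge hmM)
      linarith
    have := hx₀ (m : ℝ) hmx
    rw [Nat.floor_natCast] at this
    have hm0 : (0 : ℝ) ≤ (m : ℝ) := by positivity
    have hrw : (m : ℝ) ^ ((k : ℝ) + 1) = (m : ℝ) ^ (k + 1) := by
      rw [show ((k : ℝ) + 1) = ((k + 1 : ℕ) : ℝ) by push_cast; ring,
        Real.rpow_natCast]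
    rw [Real.norm_eq_abs, Real.norm_eq_abs, hrw,
      abs_of_nonneg (pow_nonneg hm0 (k + 1))] at this
    have hsum : (0 : ℝ) ≤ ∑ m' ∈ Finset.Icc 1 M, |∑ n ∈ Finset.Icc 1 m', f n| :=
      Finset.sum_nonneg fun i _ => abs_nonneg _
    nlinarith [pow_nonneg hm0 (k + 1)]

/-- The key combinatorial identity. -/
lemma swap_identity (f : ℕ → ℝ) (k : ℕ) (hk : 1 ≤ k) (N : ℕ) :
    ∑ n ∈ Finset.Icc 1 N, f n * ((N / n : ℕ) : ℝ) ^ k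
      = ∑ j ∈ Finset.Icc 1 N, (((j : ℝ)) ^ k - ((j - 1 : ℕ) : ℝ) ^ k)
          * ∑ n ∈ Finset.Icc 1 (N / j), f n := by
  have key : ∀ n ∈ Finset.Icc 1 N, f n * ((N / n : ℕ) : ℝ) ^ k
      = ∑ j ∈ Finset.Icc 1 (N / n), f n * (((j : ℝ)) ^ k - ((j - 1 : ℕ) : ℝ) ^ k) := by
    intro n _
    rw [← Finset.mul_sum, telescope_pow k hk]
  rw [Finset.sum_congr rfl key]
  have hcond : ∀ (n j : ℕ), n ∈ Finset.Icc 1 N ∧ j ∈ Finset.Icc 1 (N / n)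
      ↔ n ∈ Finset.Icc 1 (N / j) ∧ j ∈ Finset.Icc 1 N := by
    intro n j
    simp only [Finset.mem_Icc]
    constructor
    · rintro ⟨⟨hn1, hnN⟩, hj1, hjd⟩
      have hmul : j * n ≤ N := (Nat.le_div_iff_mul_le (by omega)).1 hjd
      have hmul' : n * j ≤ N := by rwa [Nat.mul_comm] at hmul
      refine ⟨⟨hn1, (Nat.le_div_iff_mul_le (by omega)).2 hmul'⟩, hj1, ?_⟩
      calc j ≤ j * n := Nat.le_mul_of_pos_right j (by omega)
        _ ≤ N := hmul
    · rintro ⟨⟨hn1, hnd⟩, hj1, hjN⟩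
      have hmul : n * j ≤ N := (Nat.le_div_iff_mul_le (by omega)).1 hnd
      have hmul' : j * n ≤ N := by rwa [Nat.mul_comm] at hmul
      refine ⟨⟨hn1, ?_⟩, hj1, (Nat.le_div_iff_mul_le (by omega)).2 hmul'⟩
      calc n ≤ n * j := Nat.le_mul_of_pos_right n (by omega)
        _ ≤ N := hmul
  rw [Finset.sum_comm' hcond]
  refine Finset.sum_congr rfl fun j _ => ?_
  rw [← Finset.sum_mul, mul_comm]

theorem bullet_asymp_log (f : ℕ → ℝ) (ξ : ℝ) (k : ℕ) (hk : (k : ℝ) + 1 = ξ)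
    (hf : (fun x : ℝ => ∑ n ∈ Finset.Icc 1 ⌊x⌋₊, f n) =O[atTop] fun x : ℝ => x ^ ξ) :
    (fun x : ℝ => ∑ n ∈ Finset.Icc 1 ⌊x⌋₊, f n * ((⌊x / (n : ℝ)⌋₊ : ℝ)) ^ k)
      =O[atTop] fun x : ℝ => x ^ (k + 1) * Real.log x := by
  subst hk
  rcases Nat.eq_zero_or_pos k with hk0 | hk1
  · -- k = 0 : the sum is just S(x), and x^1 ≤ x * log x eventually
    subst hk0
    simp only [pow_zero, mul_one, zero_add, pow_one]
    refine hf.trans (isBigO_iff.2 ⟨1, ?_⟩)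
    filter_upwards [eventually_ge_atTop (3 : ℝ)] with x hx
    have hx1 : (1 : ℝ) ≤ x := by linarith
    have hlog : (1 : ℝ) ≤ Real.log x := by
      rw [Real.le_log_iff_exp_le (by linarith)]
      calc Real.exp 1 ≤ 3 := by
            have := Real.exp_one_lt_d9; linarith
        _ ≤ x := hx
    rw [show ((0:ℕ):ℝ) + 1 = (1:ℝ) by norm_num, Real.rpow_one]
    rw [Real.norm_eq_abs, Real.norm_eq_abs, abs_of_nonneg (by linarith),
      abs_of_nonneg (by nlinarith)]
    nlinarith
  · obtain ⟨C, hC, hCb⟩ := exists_bound f k hf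
    rw [isBigO_iff]
    refine ⟨2 * C, ?_⟩
    filter_upwards [eventually_ge_atTop (3 : ℝ)] with x hx
    have hx0 : (0 : ℝ) < x := by linarith
    have hx1 : (1 : ℝ) ≤ x := by linarith
    have hlog : (1 : ℝ) ≤ Real.log x := by
      rw [Real.le_log_iff_exp_le hx0]
      calc Real.exp 1 ≤ 3 := by have := Real.exp_one_lt_d9; linarith
        _ ≤ x := hx
    set N := ⌊x⌋₊ with hN
    have hN1 : 1 ≤ N := Nat.one_le_floor_iff x |>.2 hx1
    have hNx : (N : ℝ) ≤ x := Nat.floor_le hx0.le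
    -- rewrite the floors
    have hfl : ∀ n : ℕ, ⌊x / (n : ℝ)⌋₊ = N / n := fun n => Nat.floor_div_natCast x n
    simp only [hfl]
    rw [swap_identity f k hk1 N]
    -- bound the sum termwise
    have hterm : ∀ j ∈ Finset.Icc 1 N,
        |(((j : ℝ)) ^ k - ((j - 1 : ℕ) : ℝ) ^ k) * ∑ n ∈ Finset.Icc 1 (N / j), f n|
          ≤ C * x ^ (k + 1) * (1 / (j : ℝ)) := by
      intro j hj
      rw [Finset.mem_Icc] at hj
      have hj1 : (1 : ℝ) ≤ (j : ℝ) := by exact_mod_cast hj.1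
      have hj0 : (0 : ℝ) < (j : ℝ) := by linarith
      have hcoeff : |(((j : ℝ)) ^ k - ((j - 1 : ℕ) : ℝ) ^ k)| ≤ (j : ℝ) ^ k := by
        rw [abs_of_nonneg]
        · nlinarith [pow_nonneg (by positivity : (0:ℝ) ≤ ((j - 1 : ℕ) : ℝ)) k]
        · have : ((j - 1 : ℕ) : ℝ) ≤ (j : ℝ) := by exact_mod_cast Nat.sub_le j 1
          have := pow_le_pow_left₀ (by positivity : (0:ℝ) ≤ ((j-1:ℕ):ℝ)) this k
          linarith
      have hdiv1 : 1 ≤ N / j := by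
        rw [Nat.le_div_iff_mul_le (by omega)]; omega
      have hS : |∑ n ∈ Finset.Icc 1 (N / j), f n| ≤ C * ((N / j : ℕ) : ℝ) ^ (k + 1) :=
        hCb _ hdiv1
      have hcast : ((N / j : ℕ) : ℝ) ≤ x / (j : ℝ) := by
        calc ((N / j : ℕ) : ℝ) ≤ (N : ℝ) / (j : ℝ) := Nat.cast_div_le
          _ ≤ x / (j : ℝ) := by gcongr
      have hSx : |∑ n ∈ Finset.Icc 1 (N / j), f n| ≤ C * (x / (j : ℝ)) ^ (k + 1) := by
        refine hS.trans ?_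
        have := pow_le_pow_left₀ (by positivity : (0:ℝ) ≤ ((N / j : ℕ) : ℝ)) hcast (k + 1)
        nlinarith
      calc |(((j : ℝ)) ^ k - ((j - 1 : ℕ) : ℝ) ^ k) * ∑ n ∈ Finset.Icc 1 (N / j), f n|
          = |(((j : ℝ)) ^ k - ((j - 1 : ℕ) : ℝ) ^ k)| * |∑ n ∈ Finset.Icc 1 (N / j), f n| :=
            abs_mul _ _
        _ ≤ (j : ℝ) ^ k * (C * (x / (j : ℝ)) ^ (k + 1)) := by
            apply mul_le_mul hcoeff hSx (abs_nonneg _) (by positivity)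
        _ = C * x ^ (k + 1) * (1 / (j : ℝ)) := by
            rw [div_pow]
            field_simp
            ring
    have hsum : |∑ j ∈ Finset.Icc 1 N, (((j : ℝ)) ^ k - ((j - 1 : ℕ) : ℝ) ^ k)
          * ∑ n ∈ Finset.Icc 1 (N / j), f n|
        ≤ C * x ^ (k + 1) * ∑ j ∈ Finset.Icc 1 N, (1 / (j : ℝ)) := by
      calc |∑ j ∈ Finset.Icc 1 N, (((j : ℝ)) ^ k - ((j - 1 : ℕ) : ℝ) ^ k)
            * ∑ n ∈ Finset.Icc 1 (N / j), f n|
          ≤ ∑ j ∈ Finset.Icc 1 N, |(((j : ℝ)) ^ k - ((j - 1 : ℕ) : ℝ) ^ k)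
            * ∑ n ∈ Finset.Icc 1 (N / j), f n| := Finset.abs_sum_le_sum_abs _ _
        _ ≤ ∑ j ∈ Finset.Icc 1 N, C * x ^ (k + 1) * (1 / (j : ℝ)) :=
            Finset.sum_le_sum hterm
        _ = C * x ^ (k + 1) * ∑ j ∈ Finset.Icc 1 N, (1 / (j : ℝ)) := by
            rw [Finset.mul_sum]
    have hharm : ∑ j ∈ Finset.Icc 1 N, (1 / (j : ℝ)) = (harmonic N : ℝ) := by
      rw [harmonic]
      push_cast
      rw [show Finset.Icc 1 N = Finset.Ico 1 (N + 1) by rfl, Finset.sum_Ico_eq_sum_range]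
      simp only [Nat.add_sub_cancel]
      refine Finset.sum_congr rfl fun i _ => ?_
      rw [one_div]
      norm_num [add_comm]
    have hharm_le : (harmonic N : ℝ) ≤ 1 + Real.log x := harmonic_floor_le_one_add_log x hx1
    have hpow : (0:ℝ) ≤ x ^ (k + 1) := by positivity
    rw [Real.norm_eq_abs, Real.norm_eq_abs,
      abs_of_nonneg (mul_nonneg hpow (by linarith : (0:ℝ) ≤ Real.log x))]
    rw [hharm] at hsum
    nlinarith [mul_nonneg (mul_nonneg hC.le hpow) (by linarith : (0:ℝ) ≤ Real.log x - 1),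
      mul_le_mul_of_nonneg_left hharm_le (mul_nonneg hC.le hpow)]
end

section
/- Let F be an arithmetic function and f its Möbius inverse (F = f ∗ 1, Dirichlet convolution with the constant-one function). Fix k ≥ 2. Then for all real x ≥ 1, ∑_{x₁⋯x_k ≤ x} F(gcd(x₁,…,x_k)) = ∑_{n : n^k ≤ x} f(n) T_k(x/n^k), where T_k(y) = ∑_{m ≤ y} τ_k(m). -/
open Finset

theorem gcd_sum_via_moebius_inverse (k : ℕ) (hk : 2 ≤ k) (f F : ℕ → ℝ)
    (hF : ∀ n : ℕ, F n = ∑ d ∈ n.divisors, f d)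
    (τk : ℕ → ℕ)
    (hτ : ∀ m : ℕ, τk m =
      ((Fintype.piFinset fun _ : Fin k => m.divisors).filter
        (fun v : Fin k → ℕ => ∏ i, v i = m)).card)
    (T : ℝ → ℝ)
    (hT : ∀ y : ℝ, T y = ∑ m ∈ Finset.Icc 1 ⌊y⌋₊, (τk m : ℝ))
    (x : ℝ) (hx : 1 ≤ x) :
    ∑ v ∈ (Fintype.piFinset fun _ : Fin k => Finset.Icc 1 ⌊x⌋₊).filter
        (fun v : Fin k → ℕ => ((∏ i, v i : ℕ) : ℝ) ≤ x),
      F (Finset.univ.gcd v)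
    = ∑ n ∈ (Finset.Icc 1 ⌊x⌋₊).filter (fun n : ℕ => ((n : ℝ)) ^ k ≤ x),
        f n * T (x / (n : ℝ) ^ k) := by
  have hk0 : 0 < k := by omega
  have hx0 : (0:ℝ) < x := lt_of_lt_of_le one_pos hx
  set N := ⌊x⌋₊ with hNdef
  set S := (Fintype.piFinset fun _ : Fin k => Finset.Icc 1 N).filter
      (fun v : Fin k → ℕ => ((∏ i, v i : ℕ) : ℝ) ≤ x) with hSdef
  have hmemS : ∀ v : Fin k → ℕ, v ∈ S ↔
      (∀ i, 1 ≤ v i ∧ v i ≤ N) ∧ ((∏ i, v i : ℕ) : ℝ) ≤ x := by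
    intro v
    simp [hSdef, Fintype.mem_piFinset, Finset.mem_Icc]
  -- a generic fact: a tuple of positives with real product ≤ y has each entry ≤ ⌊y⌋₊
  have hboundN : ∀ v : Fin k → ℕ, (∀ i, 1 ≤ v i) → ((∏ i, v i : ℕ) : ℝ) ≤ x →
      ∀ i, v i ≤ N := by
    intro v h1 hp i
    have h2 : v i ≤ ∏ j, v j :=
      Finset.single_le_prod' (fun j _ => h1 j) (Finset.mem_univ i)
    have : ((v i : ℕ) : ℝ) ≤ x := le_trans (by exact_mod_cast h2) hp
    exact Nat.le_floor this
  -- Step 1: expand divisors of gcd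
  have hdiv : ∀ v ∈ S, (Finset.univ.gcd v).divisors
      = (Finset.Icc 1 N).filter (fun d => ∀ i, d ∣ v i) := by
    intro v hv
    rw [hmemS] at hv
    obtain ⟨hv1, _⟩ := hv
    have i0 : Fin k := ⟨0, hk0⟩
    ext d
    simp only [Nat.mem_divisors, Finset.mem_filter, Finset.mem_Icc, Finset.dvd_gcd_iff,
      Finset.mem_univ, forall_const, true_implies]
    constructor
    · rintro ⟨hd, _⟩
      have h1 : 0 < v i0 := (hv1 i0).1
      have hdle : d ≤ v i0 := Nat.le_of_dvd h1 (hd i0)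
      have hd0 : d ≠ 0 := by
        rintro rfl
        have := (zero_dvd_iff).mp (hd i0); omega
      exact ⟨⟨Nat.one_le_iff_ne_zero.mpr hd0, le_trans hdle (hv1 i0).2⟩, hd⟩
    · rintro ⟨⟨hd1, _⟩, hd⟩
      refine ⟨hd, ?_⟩
      rw [Ne, Finset.gcd_eq_zero_iff]
      intro h
      have := h i0 (Finset.mem_univ _)
      have := (hv1 i0).1
      omega
  calc ∑ v ∈ S, F (Finset.univ.gcd v)
      = ∑ v ∈ S, ∑ d ∈ (Finset.Icc 1 N).filter (fun d => ∀ i, d ∣ v i), f d := by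
        exact Finset.sum_congr rfl fun v hv => by rw [hF, hdiv v hv]
    _ = ∑ d ∈ Finset.Icc 1 N, ∑ v ∈ S.filter (fun v => ∀ i, d ∣ v i), f d := by
        simp_rw [Finset.sum_filter]
        exact Finset.sum_comm
    _ = ∑ d ∈ Finset.Icc 1 N, f d * ((S.filter (fun v => ∀ i, d ∣ v i)).card : ℝ) := by
        exact Finset.sum_congr rfl fun d _ => by
          rw [Finset.sum_const, nsmul_eq_mul, mul_comm]
    _ = ∑ d ∈ (Finset.Icc 1 N).filter (fun n : ℕ => ((n : ℝ)) ^ k ≤ x),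
          f d * ((S.filter (fun v => ∀ i, d ∣ v i)).card : ℝ) := by
        refine (Finset.sum_filter_of_ne ?_).symm
        intro d _ hne
        by_contra hdk
        apply hne
        have hempty : S.filter (fun v => ∀ i, d ∣ v i) = ∅ := by
          rw [Finset.filter_eq_empty_iff]
          intro v hv hall
          rw [hmemS] at hv
          obtain ⟨hv1, hv2⟩ := hv
          have hdvd : d ^ k ∣ ∏ i, v i := by
            have := Finset.prod_dvd_prod_of_dvd (s := (Finset.univ : Finset (Fin k)))
              (fun _ => d) v (fun i _ => hall i)
            simpa using this
          have hpos : 0 < ∏ i, v i := Finset.prod_pos (fun i _ => (hv1 i).1)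
          have hle : d ^ k ≤ ∏ i, v i := Nat.le_of_dvd hpos hdvd
          have : ((d : ℝ)) ^ k ≤ x := by
            calc ((d:ℝ))^k = ((d^k : ℕ) : ℝ) := by push_cast; ring
            _ ≤ ((∏ i, v i : ℕ) : ℝ) := by exact_mod_cast hle
            _ ≤ x := hv2
          exact hdk this
        rw [hempty]
        simp
    _ = ∑ n ∈ (Finset.Icc 1 N).filter (fun n : ℕ => ((n : ℝ)) ^ k ≤ x),
          f n * T (x / (n : ℝ) ^ k) := by
        refine Finset.sum_congr rfl fun d hd => ?_
        rw [Finset.mem_filter, Finset.mem_Icc] at hd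
        obtain ⟨⟨hd1, hdN⟩, hdk⟩ := hd
        have hdpos : (0:ℝ) < (d:ℝ) := by exact_mod_cast hd1
        have hdkpos : (0:ℝ) < (d:ℝ)^k := pow_pos hdpos k
        have hy0 : (0:ℝ) ≤ x / (d:ℝ)^k := le_of_lt (div_pos hx0 hdkpos)
        set M := ⌊x / (d:ℝ)^k⌋₊ with hMdef
    -- real/floor conversion
        have hfloorM : ∀ n : ℕ, n ≤ M ↔ ((n:ℕ):ℝ) ≤ x / (d:ℝ)^k := by
          intro n; rw [hMdef, Nat.le_floor_iff hy0]
        set W := (Fintype.piFinset fun _ : Fin k => Finset.Icc 1 M).filter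
            (fun w : Fin k → ℕ => ∏ i, w i ≤ M) with hWdef
        have hmemW : ∀ w : Fin k → ℕ, w ∈ W ↔
            (∀ i, 1 ≤ w i ∧ w i ≤ M) ∧ ∏ i, w i ≤ M := by
          intro w; simp [hWdef, Fintype.mem_piFinset, Finset.mem_Icc]
        -- Claim A : sum of τk over Icc 1 M equals W.card
        have hA : ∑ m ∈ Finset.Icc 1 M, τk m = W.card := by
          have hfib : ∀ w ∈ W, (∏ i, w i) ∈ Finset.Icc 1 M := by
            intro w hw
            rw [hmemW] at hw
            exact Finset.mem_Icc.mpr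
              ⟨Finset.one_le_prod' (fun i _ => (hw.1 i).1), hw.2⟩
          rw [Finset.card_eq_sum_card_fiberwise hfib]
          refine Finset.sum_congr rfl fun m hm => ?_
          rw [Finset.mem_Icc] at hm
          rw [hτ]
          congr 1
          ext w
          simp only [Finset.mem_filter, Fintype.mem_piFinset, Nat.mem_divisors,
            hmemW, Finset.mem_Icc]
          constructor
          · rintro ⟨hdvd, hprod⟩
            have h1 : ∀ i, 1 ≤ w i ∧ w i ≤ M := by
              intro i
              have hwi : w i ∣ m := (hdvd i).1
              have hm0 : m ≠ 0 := by omega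
              have : 0 < w i := Nat.pos_of_ne_zero (fun h => hm0 (by
                rw [h] at hwi; exact (zero_dvd_iff).mp hwi))
              exact ⟨this, le_trans (Nat.le_of_dvd (by omega) hwi) hm.2⟩
            exact ⟨⟨h1, by rw [hprod]; exact hm.2⟩, hprod⟩
          · rintro ⟨⟨h1, _⟩, hprod⟩
            refine ⟨fun i => ⟨?_, by omega⟩, hprod⟩
            rw [← hprod]
            exact Finset.dvd_prod_of_mem w (Finset.mem_univ i)
        -- Claim B : bijection between the v-set and W
        have hB : (S.filter (fun v => ∀ i, d ∣ v i)).card = W.card := by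
          refine Finset.card_bij (fun v _ => fun j => v j / d) ?_ ?_ ?_
          · intro v hv
            rw [Finset.mem_filter, hmemS] at hv
            obtain ⟨⟨hv1, hv2⟩, hall⟩ := hv
            have hveq : ∀ j, v j = d * (v j / d) := fun j =>
              (Nat.mul_div_cancel' (hall j)).symm
            have hprodeq : ∏ i, v i = d ^ k * ∏ i, v i / d := by
              calc ∏ i, v i = ∏ i, d * (v i / d) := by
                    exact Finset.prod_congr rfl fun i _ => hveq i
                _ = (∏ _i : Fin k, d) * ∏ i, v i / d := Finset.prod_mul_distrib
                _ = d ^ k * ∏ i, v i / d := by simp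
            have hw1 : ∀ j, 1 ≤ v j / d := by
              intro j
              have : d ≤ v j := Nat.le_of_dvd (hv1 j).1 (hall j)
              exact Nat.one_le_div_iff (by omega) |>.mpr this
            have hprodle : ∏ i, v i / d ≤ M := by
              rw [hfloorM]
              rw [le_div_iff₀ hdkpos]
              calc ((∏ i, v i / d : ℕ) : ℝ) * (d:ℝ)^k
                  = ((d ^ k * ∏ i, v i / d : ℕ) : ℝ) := by push_cast; ring
                _ = ((∏ i, v i : ℕ) : ℝ) := by rw [← hprodeq]
                _ ≤ x := hv2
            rw [hmemW]
            refine ⟨fun j => ⟨hw1 j, ?_⟩, hprodle⟩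
            exact le_trans (Finset.single_le_prod' (fun i _ => hw1 i)
              (Finset.mem_univ j)) hprodle
          · intro v₁ hv₁ v₂ hv₂ heq
            rw [Finset.mem_filter] at hv₁ hv₂
            funext j
            have h1 : v₁ j = d * (v₁ j / d) := (Nat.mul_div_cancel' (hv₁.2 j)).symm
            have h2 : v₂ j = d * (v₂ j / d) := (Nat.mul_div_cancel' (hv₂.2 j)).symm
            have heq' : v₁ j / d = v₂ j / d := congrFun heq j
            rw [h1, h2, heq']
          · intro w hw
            rw [hmemW] at hw
            obtain ⟨hw1, hwM⟩ := hw
            refine ⟨fun j => d * w j, ?_, ?_⟩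
            · have hall : ∀ i, d ∣ d * w i := fun i => Dvd.intro (w i) rfl
              have hprodeq : ∏ i, d * w i = d ^ k * ∏ i, w i := by
                rw [Finset.prod_mul_distrib]; simp
              have hprodx : ((∏ i, d * w i : ℕ) : ℝ) ≤ x := by
                rw [hprodeq]
                have : ((∏ i, w i : ℕ) : ℝ) ≤ x / (d:ℝ)^k := (hfloorM _).mp hwM
                calc ((d ^ k * ∏ i, w i : ℕ) : ℝ)
                    = (d:ℝ)^k * ((∏ i, w i : ℕ):ℝ) := by push_cast; ring
                  _ ≤ (d:ℝ)^k * (x / (d:ℝ)^k) := by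
                      exact mul_le_mul_of_nonneg_left this (le_of_lt hdkpos)
                  _ = x := by field_simp
              have h1 : ∀ i, 1 ≤ d * w i := fun i =>
                Nat.one_le_iff_ne_zero.mpr (by
                  have := (hw1 i).1; positivity)
              rw [Finset.mem_filter, hmemS]
              exact ⟨⟨fun i => ⟨h1 i, hboundN _ h1 hprodx i⟩, hprodx⟩, hall⟩
            · funext j
              exact Nat.mul_div_cancel_left (w j) (by omega)
        rw [hB, hT]
        congr 1
        rw [← hMdef]
        rw [← hA]
        push_cast
        ring
end

section
/- ∑_{ab ≤ x} τ(gcd(a,b)) = (π²/6) x log x + O(x) as x → ∞, where the sum is over ordered pairs (a,b) of positive integers with ab ≤ x. -/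
open Finset Filter Asymptotics


private lemma filter_mul_le_eq (y : ℝ) (hy : 0 ≤ y) (m : ℕ) (hm : 1 ≤ m) :
    (Finset.Icc 1 ⌊y⌋₊).filter (fun n : ℕ => ((m * n : ℕ) : ℝ) ≤ y)
      = Finset.Icc 1 ⌊y / (m : ℝ)⌋₊ := by
  have hm0 : (0 : ℝ) < m := by exact_mod_cast hm
  ext n
  simp only [mem_filter, mem_Icc]
  constructor
  · rintro ⟨⟨h1, _⟩, h3⟩
    push_cast at h3
    refine ⟨h1, Nat.le_floor ?_⟩
    rw [le_div_iff₀ hm0]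
    nlinarith
  · rintro ⟨h1, h2⟩
    have hnd : (n : ℝ) ≤ y / m := (Nat.le_floor_iff (by positivity)).mp h2
    have h3 : ((m * n : ℕ) : ℝ) ≤ y := by
      push_cast
      rw [le_div_iff₀ hm0] at hnd
      nlinarith
    refine ⟨⟨h1, Nat.le_floor ?_⟩, h3⟩
    calc (n : ℝ) ≤ y / m := hnd
    _ ≤ y := div_le_self hy (by exact_mod_cast hm)

private lemma cardB (y : ℝ) (hy : 0 ≤ y) :
    (((Finset.Icc 1 ⌊y⌋₊) ×ˢ (Finset.Icc 1 ⌊y⌋₊)).filter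
        (fun p : ℕ × ℕ => ((p.1 * p.2 : ℕ) : ℝ) ≤ y)).card
      = ∑ m ∈ Finset.Icc 1 ⌊y⌋₊, ⌊y / (m : ℝ)⌋₊ := by
  rw [Finset.card_filter, Finset.sum_product]
  refine Finset.sum_congr rfl fun m hm => ?_
  rw [mem_Icc] at hm
  rw [← Finset.card_filter, filter_mul_le_eq y hy m hm.1, Nat.card_Icc]
  simp

private lemma cardBd (x : ℝ) (hx : 0 ≤ x) (d : ℕ) (hd : 1 ≤ d) :
    (((Finset.Icc 1 ⌊x⌋₊) ×ˢ (Finset.Icc 1 ⌊x⌋₊)).filter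
        (fun p : ℕ × ℕ => (((p.1 * p.2 : ℕ) : ℝ) ≤ x) ∧ d ∣ p.1 ∧ d ∣ p.2)).card
      = (((Finset.Icc 1 ⌊x / (d:ℝ)^2⌋₊) ×ˢ (Finset.Icc 1 ⌊x / (d:ℝ)^2⌋₊)).filter
        (fun p : ℕ × ℕ => ((p.1 * p.2 : ℕ) : ℝ) ≤ x / (d:ℝ)^2)).card := by
  have hd0 : (0:ℝ) < (d:ℝ)^2 := by positivity
  refine Finset.card_nbij' (i := fun p => (p.1 / d, p.2 / d))
    (j := fun q => (d * q.1, d * q.2)) ?_ ?_ ?_ ?_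
  · rintro ⟨a, b⟩ hp
    simp only [Finset.mem_coe, mem_filter, mem_product, mem_Icc] at hp ⊢
    obtain ⟨⟨⟨ha1, _⟩, ⟨hb1, _⟩⟩, hab, ⟨m, rfl⟩, ⟨n, rfl⟩⟩ := hp
    have hdn : 0 < d := hd
    rw [Nat.mul_div_cancel_left m hdn, Nat.mul_div_cancel_left n hdn]
    have hm1 : 1 ≤ m := Nat.one_le_iff_ne_zero.mpr (by rintro rfl; simp at ha1)
    have hn1 : 1 ≤ n := Nat.one_le_iff_ne_zero.mpr (by rintro rfl; simp at hb1)
    push_cast at hab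
    have key : ((m : ℝ)) * n ≤ x / (d:ℝ)^2 := by
      rw [le_div_iff₀ hd0]; nlinarith
    have hm : (m : ℝ) ≤ x / (d:ℝ)^2 := by
      have : (1:ℝ) ≤ n := by exact_mod_cast hn1
      nlinarith [key, (by positivity : (0:ℝ) < (m:ℝ))]
    have hn : (n : ℝ) ≤ x / (d:ℝ)^2 := by
      have : (1:ℝ) ≤ m := by exact_mod_cast hm1
      nlinarith [key, (by positivity : (0:ℝ) < (n:ℝ))]
    exact ⟨⟨⟨hm1, Nat.le_floor hm⟩, ⟨hn1, Nat.le_floor hn⟩⟩, by push_cast; exact key⟩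
  · rintro ⟨m, n⟩ hq
    simp only [Finset.mem_coe, mem_filter, mem_product, mem_Icc] at hq ⊢
    obtain ⟨⟨⟨hm1, _⟩, ⟨hn1, _⟩⟩, hmn⟩ := hq
    push_cast at hmn
    rw [le_div_iff₀ hd0] at hmn
    have hd1 : (1:ℝ) ≤ d := by exact_mod_cast hd
    have hm1' : (1:ℝ) ≤ m := by exact_mod_cast hm1
    have hn1' : (1:ℝ) ≤ n := by exact_mod_cast hn1
    have hab : ((d*m : ℕ) : ℝ) * ((d*n : ℕ) : ℝ) ≤ x := by push_cast; nlinarith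
    have ha : ((d*m : ℕ) : ℝ) ≤ x := by
      have h2 : (1:ℝ) ≤ ((d*n : ℕ) : ℝ) := by push_cast; nlinarith
      nlinarith [hab, (by push_cast; positivity : (0:ℝ) < ((d*m : ℕ) : ℝ))]
    have hb : ((d*n : ℕ) : ℝ) ≤ x := by
      have h2 : (1:ℝ) ≤ ((d*m : ℕ) : ℝ) := by push_cast; nlinarith
      nlinarith [hab, (by push_cast; positivity : (0:ℝ) < ((d*n : ℕ) : ℝ))]
    refine ⟨⟨⟨Nat.mul_pos hd hm1, Nat.le_floor ha⟩, ⟨Nat.mul_pos hd hn1, Nat.le_floor hb⟩⟩,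
      by push_cast; push_cast at hab; exact hab, ⟨m, rfl⟩, ⟨n, rfl⟩⟩
  · rintro ⟨a, b⟩ hp
    simp only [Finset.mem_coe, mem_filter] at hp
    obtain ⟨-, -, ⟨m, rfl⟩, ⟨n, rfl⟩⟩ := hp
    simp [Nat.mul_div_cancel_left _ (show 0 < d from hd)]
  · rintro ⟨m, n⟩ _
    simp [Nat.mul_div_cancel_left _ (show 0 < d from hd)]

private lemma gcd_divisors_eq (N a b : ℕ) (ha : 1 ≤ a) (hb : 1 ≤ b) (haN : a ≤ N) :
    (Nat.gcd a b).divisors = (Finset.Icc 1 N).filter (fun d => d ∣ a ∧ d ∣ b) := by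
  ext d
  simp only [Nat.mem_divisors, mem_filter, mem_Icc, Nat.dvd_gcd_iff]
  constructor
  · rintro ⟨⟨h1, h2⟩, -⟩
    exact ⟨⟨Nat.pos_of_dvd_of_pos h1 ha, le_trans (Nat.le_of_dvd ha h1) haN⟩, h1, h2⟩
  · rintro ⟨-, h1, h2⟩
    exact ⟨⟨h1, h2⟩, Nat.gcd_ne_zero_left (by omega)⟩

private lemma step1 (x : ℝ) (hx : 0 ≤ x) :
    (∑ p ∈ ((Finset.Icc 1 ⌊x⌋₊) ×ˢ (Finset.Icc 1 ⌊x⌋₊)).filter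
        (fun p : ℕ × ℕ => ((p.1 * p.2 : ℕ) : ℝ) ≤ x),
      ((Nat.gcd p.1 p.2).divisors.card : ℝ))
    = ∑ d ∈ Finset.Icc 1 ⌊x⌋₊,
        ((∑ m ∈ Finset.Icc 1 ⌊x / (d:ℝ)^2⌋₊, ⌊x / (d:ℝ)^2 / (m : ℝ)⌋₊ : ℕ) : ℝ) := by
  have key : ∀ p ∈ ((Finset.Icc 1 ⌊x⌋₊) ×ˢ (Finset.Icc 1 ⌊x⌋₊)).filter
        (fun p : ℕ × ℕ => ((p.1 * p.2 : ℕ) : ℝ) ≤ x),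
      ((Nat.gcd p.1 p.2).divisors.card : ℝ)
        = ∑ d ∈ Finset.Icc 1 ⌊x⌋₊, if d ∣ p.1 ∧ d ∣ p.2 then (1:ℝ) else 0 := by
    rintro ⟨a, b⟩ hp
    simp only [mem_filter, mem_product, mem_Icc] at hp
    obtain ⟨⟨⟨ha1, haN⟩, ⟨hb1, _⟩⟩, -⟩ := hp
    rw [gcd_divisors_eq ⌊x⌋₊ a b ha1 hb1 haN, Finset.card_filter]
    push_cast
    rfl
  rw [Finset.sum_congr rfl key, Finset.sum_comm]
  refine Finset.sum_congr rfl fun d hd => ?_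
  rw [mem_Icc] at hd
  rw [← Finset.sum_filter, Finset.filter_filter]
  have : ∀ (s : Finset (ℕ × ℕ)), (∑ _p ∈ s, (1:ℝ)) = (s.card : ℝ) := by
    intro s; rw [Finset.sum_const]; simp
  rw [this, cardBd x hx d hd.1, cardB (x / (d:ℝ)^2) (by positivity)]


private lemma D_est (y : ℝ) (hy : 1 ≤ y) :
    |(∑ m ∈ Finset.Icc 1 ⌊y⌋₊, (⌊y / (m : ℝ)⌋₊ : ℝ)) - y * Real.log y| ≤ y := by
  have hy0 : (0:ℝ) ≤ y := le_trans zero_le_one hy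
  have hH : ((harmonic ⌊y⌋₊ : ℚ) : ℝ) = ∑ m ∈ Finset.Icc 1 ⌊y⌋₊, ((m:ℝ))⁻¹ := by
    rw [harmonic_eq_sum_Icc]; push_cast; rfl
  have hupper : (∑ m ∈ Finset.Icc 1 ⌊y⌋₊, (⌊y / (m : ℝ)⌋₊ : ℝ))
      ≤ y * (1 + Real.log y) := by
    calc (∑ m ∈ Finset.Icc 1 ⌊y⌋₊, (⌊y / (m : ℝ)⌋₊ : ℝ))
        ≤ ∑ m ∈ Finset.Icc 1 ⌊y⌋₊, y / (m:ℝ) := by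
          refine Finset.sum_le_sum fun m hm => Nat.floor_le (by
            rw [mem_Icc] at hm
            have : (0:ℝ) < m := by exact_mod_cast hm.1
            positivity)
      _ = y * ((harmonic ⌊y⌋₊ : ℚ) : ℝ) := by
          rw [hH, Finset.mul_sum]; exact Finset.sum_congr rfl fun m _ => (div_eq_mul_inv _ _)
      _ ≤ y * (1 + Real.log y) := by
          have := harmonic_floor_le_one_add_log y hy
          nlinarith
  have hlower : y * Real.log y - y
      ≤ (∑ m ∈ Finset.Icc 1 ⌊y⌋₊, (⌊y / (m : ℝ)⌋₊ : ℝ)) := by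
    have h1 : ∑ m ∈ Finset.Icc 1 ⌊y⌋₊, (y / (m:ℝ) - 1)
        ≤ ∑ m ∈ Finset.Icc 1 ⌊y⌋₊, (⌊y / (m : ℝ)⌋₊ : ℝ) := by
      refine Finset.sum_le_sum fun m hm => ?_
      have := Nat.lt_floor_add_one (y / (m:ℝ))
      linarith
    have h2 : ∑ m ∈ Finset.Icc 1 ⌊y⌋₊, (y / (m:ℝ) - 1)
        = y * ((harmonic ⌊y⌋₊ : ℚ) : ℝ) - (⌊y⌋₊ : ℝ) := by
      rw [Finset.sum_sub_distrib, hH, Finset.mul_sum, Finset.sum_const, Nat.card_Icc]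
      simp [div_eq_mul_inv]
    have h3 := log_le_harmonic_floor y hy0
    have h4 : (⌊y⌋₊ : ℝ) ≤ y := Nat.floor_le hy0
    rw [h2] at h1
    nlinarith
  rw [abs_le]
  constructor <;> nlinarith

private lemma zeta_partial_le (K : ℕ) :
    ∑ d ∈ Finset.Icc 1 K, ((d:ℝ)^2)⁻¹ ≤ Real.pi ^ 2 / 6 := by
  have h := hasSum_zeta_two
  have : ∑ d ∈ Finset.Icc 1 K, ((d:ℝ)^2)⁻¹ = ∑ d ∈ Finset.range (K+1), 1 / (d:ℝ)^2 := by
    rw [Finset.range_eq_Ico, ← Finset.Ico_add_one_right_eq_Icc]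
    rw [Finset.sum_eq_sum_Ico_succ_bot (Nat.succ_pos K)]
    simp [one_div]
  rw [this]
  exact sum_le_hasSum _ (fun i _ => by positivity) h

private lemma zeta_partial_ge (K : ℕ) (hK : 1 ≤ K) :
    Real.pi ^ 2 / 6 - ((K:ℝ))⁻¹ ≤ ∑ d ∈ Finset.Icc 1 K, ((d:ℝ)^2)⁻¹ := by
  have h := hasSum_zeta_two
  have htend : Tendsto (fun n : ℕ => ∑ d ∈ Finset.Icc 1 n, ((d:ℝ)^2)⁻¹) atTop
      (nhds (Real.pi ^ 2 / 6)) := by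
    have h2 := h.tendsto_sum_nat.comp (tendsto_add_atTop_nat 1)
    refine h2.congr fun n => ?_
    simp only [Function.comp_apply]
    rw [Finset.range_eq_Ico, ← Finset.Ico_add_one_right_eq_Icc]
    rw [Finset.sum_eq_sum_Ico_succ_bot (Nat.succ_pos n)]
    simp [one_div]
  have hev : ∀ᶠ n in atTop, (fun n : ℕ => ∑ d ∈ Finset.Icc 1 n, ((d:ℝ)^2)⁻¹) n
      ≤ ∑ d ∈ Finset.Icc 1 K, ((d:ℝ)^2)⁻¹ + ((K:ℝ))⁻¹ := by
    filter_upwards [eventually_ge_atTop K] with n hn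
    have hsplit : Finset.Icc 1 n = Finset.Icc 1 K ∪ Finset.Ioc K n := by
      ext a; simp only [Finset.mem_Icc, Finset.mem_union, Finset.mem_Ioc]; omega
    rw [hsplit, Finset.sum_union (by
      rw [Finset.disjoint_left]
      intro a ha hb
      rw [mem_Icc] at ha; rw [mem_Ioc] at hb; omega)]
    have := sum_Ioc_inv_sq_le_sub (α := ℝ) (Nat.one_le_iff_ne_zero.mp hK) hn
    have hn0 : (0:ℝ) ≤ ((n:ℝ))⁻¹ := by positivity
    linarith
  have := le_of_tendsto htend hev
  linarith

private lemma logsum_le (K : ℕ) :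
    ∑ d ∈ Finset.Icc 1 K, Real.log d / (d:ℝ)^2
      ≤ 2 * ∑' n : ℕ, (n:ℝ) ^ (-(3/2 : ℝ)) := by
  have hsum : Summable (fun n : ℕ => (n:ℝ) ^ (-(3/2 : ℝ))) :=
    Real.summable_nat_rpow.mpr (by norm_num)
  have hterm : ∀ d : ℕ, 1 ≤ d → Real.log d / (d:ℝ)^2 ≤ 2 * (d:ℝ) ^ (-(3/2 : ℝ)) := by
    intro d hd
    have hd0 : (0:ℝ) < d := by exact_mod_cast hd
    have hlog : Real.log d ≤ 2 * (d:ℝ) ^ ((1/2 : ℝ)) := by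
      have h1 : Real.log ((d:ℝ) ^ ((1/2:ℝ))) ≤ (d:ℝ) ^ ((1/2:ℝ)) - 1 :=
        Real.log_le_sub_one_of_pos (by positivity)
      rw [Real.log_rpow hd0] at h1
      nlinarith
    have h2 : (d:ℝ)^2 = (d:ℝ) ^ ((2:ℝ)) := by
      rw [← Real.rpow_natCast (d:ℝ) 2]; norm_num
    rw [div_le_iff₀ (by positivity), h2]
    calc Real.log d ≤ 2 * (d:ℝ) ^ ((1/2 : ℝ)) := hlog
      _ = 2 * (d:ℝ) ^ (-(3/2 : ℝ)) * (d:ℝ) ^ ((2:ℝ)) := by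
          rw [mul_assoc, ← Real.rpow_add hd0]; norm_num
  calc ∑ d ∈ Finset.Icc 1 K, Real.log d / (d:ℝ)^2
      ≤ ∑ d ∈ Finset.Icc 1 K, 2 * (d:ℝ) ^ (-(3/2 : ℝ)) := by
        refine Finset.sum_le_sum fun d hd => hterm d (by rw [mem_Icc] at hd; exact hd.1)
    _ = 2 * ∑ d ∈ Finset.Icc 1 K, (d:ℝ) ^ (-(3/2 : ℝ)) := by rw [Finset.mul_sum]
    _ ≤ 2 * ∑' n : ℕ, (n:ℝ) ^ (-(3/2 : ℝ)) := by
        have := Summable.sum_le_tsum (Finset.Icc 1 K) (fun i _ => Real.rpow_nonneg (Nat.cast_nonneg i) (-(3/2:ℝ))) hsum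
        linarith

set_option maxHeartbeats 2000000 in
theorem tau_gcd_pairs_asymp :
    (fun x : ℝ =>
        (∑ p ∈ ((Finset.Icc 1 ⌊x⌋₊) ×ˢ (Finset.Icc 1 ⌊x⌋₊)).filter
            (fun p : ℕ × ℕ => ((p.1 * p.2 : ℕ) : ℝ) ≤ x),
          ((Nat.gcd p.1 p.2).divisors.card : ℝ))
        - Real.pi ^ 2 / 6 * x * Real.log x)
      =O[atTop] fun x : ℝ => x := by
  rw [isBigO_iff]
  set C₀ : ℝ := ∑' n : ℕ, (n:ℝ) ^ (-(3/2 : ℝ)) with hC₀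
  have hC₀0 : 0 ≤ C₀ := tsum_nonneg fun n => Real.rpow_nonneg (Nat.cast_nonneg n) _
  clear_value C₀
  refine ⟨Real.pi ^ 2 / 6 + 4 + 4 * C₀, ?_⟩
  filter_upwards [eventually_ge_atTop (4:ℝ)] with x hx4
  have hx1 : (1:ℝ) ≤ x := by linarith
  have hx0 : (0:ℝ) ≤ x := by linarith
  have hs2 : (2:ℝ) ≤ Real.sqrt x := by
    rw [show (2:ℝ) = Real.sqrt 4 by
      rw [show (4:ℝ) = 2^2 by norm_num, Real.sqrt_sq]; norm_num]
    exact Real.sqrt_le_sqrt hx4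
  have hs0 : (0:ℝ) < Real.sqrt x := by linarith
  have hss : Real.sqrt x * Real.sqrt x = x := Real.mul_self_sqrt hx0
  set K := ⌊Real.sqrt x⌋₊ with hKdef
  have hK1 : 1 ≤ K := Nat.le_floor (by push_cast; linarith)
  have hKlb : Real.sqrt x - 1 < (K:ℝ) := by
    have := Nat.lt_floor_add_one (Real.sqrt x); linarith
  have hKs : Real.sqrt x / 2 ≤ (K:ℝ) := by linarith
  have hK0 : (0:ℝ) < (K:ℝ) := by linarith
  have hsx : Real.sqrt x ≤ x := by nlinarith
  have hKN : K ≤ ⌊x⌋₊ := Nat.floor_le_floor hsx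
  have hKx : (K:ℝ) ≤ Real.sqrt x := Nat.floor_le (le_of_lt hs0)
  -- rewrite the sum
  rw [step1 x hx0]
  -- restrict to d ≤ K
  have hrestrict : ∑ d ∈ Finset.Icc 1 ⌊x⌋₊,
        ((∑ m ∈ Finset.Icc 1 ⌊x / (d:ℝ)^2⌋₊, ⌊x / (d:ℝ)^2 / (m : ℝ)⌋₊ : ℕ) : ℝ)
      = ∑ d ∈ Finset.Icc 1 K,
        ((∑ m ∈ Finset.Icc 1 ⌊x / (d:ℝ)^2⌋₊, ⌊x / (d:ℝ)^2 / (m : ℝ)⌋₊ : ℕ) : ℝ) := by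
    refine (Finset.sum_subset (Finset.Icc_subset_Icc_right hKN) ?_).symm
    intro d hd hd'
    rw [mem_Icc] at hd
    rw [mem_Icc, not_and] at hd'
    have hdK : K < d := by omega
    have hxd : Real.sqrt x < (d:ℝ) := by
      have := (Nat.floor_lt (le_of_lt hs0)).mp hdK
      exact this
    have : x < (d:ℝ)^2 := by nlinarith
    have hdpos : (0:ℝ) < (d:ℝ)^2 := by
      have : (0:ℝ) < (d:ℝ) := by exact_mod_cast hd.1
      positivity
    have hfl : ⌊x / (d:ℝ)^2⌋₊ = 0 := by
      rw [Nat.floor_eq_zero, div_lt_one hdpos]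
      exact this
    rw [hfl]
    simp
  rw [hrestrict]
  -- per-term facts
  have hyd : ∀ d ∈ Finset.Icc 1 K, (1:ℝ) ≤ x / (d:ℝ)^2 := by
    intro d hd
    rw [mem_Icc] at hd
    have hd0 : (0:ℝ) < d := by exact_mod_cast hd.1
    have hdK : (d:ℝ) ≤ Real.sqrt x := le_trans (by exact_mod_cast hd.2) hKx
    rw [le_div_iff₀ (by positivity)]
    nlinarith
  set L := Real.log x with hL
  have hL0 : 0 ≤ L := Real.log_nonneg hx1
  have hLle : L ≤ 2 * Real.sqrt x := by
    have h1 : Real.log (Real.sqrt x) ≤ Real.sqrt x - 1 :=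
      Real.log_le_sub_one_of_pos hs0
    have h2 : Real.log (Real.sqrt x) = L / 2 := by
      rw [hL, Real.log_sqrt hx0]
    nlinarith
  set P := ∑ d ∈ Finset.Icc 1 K, ((d:ℝ)^2)⁻¹ with hP
  set Q := ∑ d ∈ Finset.Icc 1 K, Real.log d / (d:ℝ)^2 with hQ
  have hP1 : P ≤ Real.pi ^ 2 / 6 := zeta_partial_le K
  have hP2 : Real.pi ^ 2 / 6 - ((K:ℝ))⁻¹ ≤ P := zeta_partial_ge K hK1
  have hQ0 : 0 ≤ Q := Finset.sum_nonneg fun d hd => by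
    rw [mem_Icc] at hd
    have : (1:ℝ) ≤ d := by exact_mod_cast hd.1
    exact div_nonneg (Real.log_nonneg this) (by positivity)
  have hQle : Q ≤ 2 * C₀ := by rw [hC₀]; exact logsum_le K
  clear_value K
  have hinvK : ((K:ℝ))⁻¹ ≤ 2 / Real.sqrt x := by
    have h1 : ((K:ℝ))⁻¹ ≤ (Real.sqrt x / 2)⁻¹ := inv_anti₀ (by linarith) hKs
    rwa [inv_div] at h1
  -- main term computation
  have hmain : ∑ d ∈ Finset.Icc 1 K, (x / (d:ℝ)^2 * Real.log (x / (d:ℝ)^2))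
      = x * L * P - 2 * x * Q := by
    rw [hP, hQ, Finset.mul_sum, Finset.mul_sum, ← Finset.sum_sub_distrib]
    refine Finset.sum_congr rfl fun d hd => ?_
    rw [mem_Icc] at hd
    have hd0 : (0:ℝ) < d := by exact_mod_cast hd.1
    rw [Real.log_div (by positivity) (by positivity), Real.log_pow]
    push_cast
    field_simp
    ring
  clear_value L P Q
  -- error term bound
  have hT1 : |∑ d ∈ Finset.Icc 1 K,
        (((∑ m ∈ Finset.Icc 1 ⌊x / (d:ℝ)^2⌋₊, ⌊x / (d:ℝ)^2 / (m : ℝ)⌋₊ : ℕ) : ℝ)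
          - x / (d:ℝ)^2 * Real.log (x / (d:ℝ)^2))|
      ≤ Real.pi ^ 2 / 6 * x := by
    calc |∑ d ∈ Finset.Icc 1 K,
        (((∑ m ∈ Finset.Icc 1 ⌊x / (d:ℝ)^2⌋₊, ⌊x / (d:ℝ)^2 / (m : ℝ)⌋₊ : ℕ) : ℝ)
          - x / (d:ℝ)^2 * Real.log (x / (d:ℝ)^2))|
        ≤ ∑ d ∈ Finset.Icc 1 K,
          |(((∑ m ∈ Finset.Icc 1 ⌊x / (d:ℝ)^2⌋₊, ⌊x / (d:ℝ)^2 / (m : ℝ)⌋₊ : ℕ) : ℝ)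
          - x / (d:ℝ)^2 * Real.log (x / (d:ℝ)^2))| := Finset.abs_sum_le_sum_abs _ _
      _ ≤ ∑ d ∈ Finset.Icc 1 K, x * ((d:ℝ)^2)⁻¹ := by
          refine Finset.sum_le_sum fun d hd => ?_
          have h := D_est (x / (d:ℝ)^2) (hyd d hd)
          rw [Nat.cast_sum]
          rw [div_eq_mul_inv] at h
          exact h
      _ = x * P := by rw [hP, Finset.mul_sum]
      _ ≤ Real.pi ^ 2 / 6 * x := by nlinarith
  -- final bound
  have hT2 : |x * L * P - 2 * x * Q - Real.pi ^ 2 / 6 * x * L| ≤ 4 * x + 4 * C₀ * x := by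
    rw [abs_le]
    have hup : x * L * (Real.pi ^ 2 / 6 - P) ≤ 4 * x := by
      have h1 : Real.pi ^ 2 / 6 - P ≤ 2 / Real.sqrt x := le_trans (by linarith) hinvK
      have h2 : x * L ≤ x * (2 * Real.sqrt x) := mul_le_mul_of_nonneg_left hLle hx0
      have h3 : 0 ≤ Real.pi ^ 2 / 6 - P := by linarith
      calc x * L * (Real.pi ^ 2 / 6 - P) ≤ x * (2 * Real.sqrt x) * (2 / Real.sqrt x) := by
            apply mul_le_mul h2 h1 h3 (by positivity)
        _ = 4 * x := by field_simp; ring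
    have hexp : x * L * P - 2 * x * Q - Real.pi ^ 2 / 6 * x * L
        = -(x * L * (Real.pi ^ 2 / 6 - P)) - 2 * (x * Q) := by ring
    have h5 : x * Q ≤ x * (2 * C₀) := mul_le_mul_of_nonneg_left hQle hx0
    have h6 : 0 ≤ x * L * (Real.pi ^ 2 / 6 - P) :=
      mul_nonneg (mul_nonneg hx0 hL0) (by linarith)
    have h7 : 0 ≤ x * Q := mul_nonneg hx0 hQ0
    rw [hexp]
    constructor <;> nlinarith
  -- combine
  have habs : |∑ d ∈ Finset.Icc 1 K,
        ((∑ m ∈ Finset.Icc 1 ⌊x / (d:ℝ)^2⌋₊, ⌊x / (d:ℝ)^2 / (m : ℝ)⌋₊ : ℕ) : ℝ)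
      - Real.pi ^ 2 / 6 * x * L| ≤ (Real.pi ^ 2 / 6 + 4 + 4 * C₀) * x := by
    have hsplit : ∑ d ∈ Finset.Icc 1 K,
        ((∑ m ∈ Finset.Icc 1 ⌊x / (d:ℝ)^2⌋₊, ⌊x / (d:ℝ)^2 / (m : ℝ)⌋₊ : ℕ) : ℝ)
      - Real.pi ^ 2 / 6 * x * L
      = (∑ d ∈ Finset.Icc 1 K,
        (((∑ m ∈ Finset.Icc 1 ⌊x / (d:ℝ)^2⌋₊, ⌊x / (d:ℝ)^2 / (m : ℝ)⌋₊ : ℕ) : ℝ)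
          - x / (d:ℝ)^2 * Real.log (x / (d:ℝ)^2)))
        + (x * L * P - 2 * x * Q - Real.pi ^ 2 / 6 * x * L) := by
      rw [← hmain, Finset.sum_sub_distrib]
      ring
    rw [hsplit]
    calc _ ≤ |∑ d ∈ Finset.Icc 1 K,
        (((∑ m ∈ Finset.Icc 1 ⌊x / (d:ℝ)^2⌋₊, ⌊x / (d:ℝ)^2 / (m : ℝ)⌋₊ : ℕ) : ℝ)
          - x / (d:ℝ)^2 * Real.log (x / (d:ℝ)^2))|
        + |x * L * P - 2 * x * Q - Real.pi ^ 2 / 6 * x * L| := abs_add_le _ _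
      _ ≤ (Real.pi ^ 2 / 6 + 4 + 4 * C₀) * x := by nlinarith [hT1, hT2]
  rw [Real.norm_eq_abs, Real.norm_eq_abs, abs_of_nonneg hx0]
  exact habs
end
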